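/- Hermite interpolation of values (part 1 of the interpolation theorem): in the subspace framework for minimizing α_ε(P(·;ν)), if for parameter value ν^(ℓ) the subspace V_k (k ≥ ℓ) contains a right singular vector corresponding to σ_min(P(z^(ℓ); ν^(ℓ))) where z^(ℓ) is a rightmost point of Λ_ε(P(·; ν^(ℓ))), then α_ε(P(·; ν^(ℓ))) = α_ε^{V_k}(P(·; ν^(ℓ))). -/

import Mathlib

open Matrix Complex

/-- Euclidean norm of a complex vector. -/
noncomputable def vnorm {ι : Type*} [Fintype ι] (v : ι → ℂ) : ℝ :=
  Real.sqrt (∑ i, ‖v i‖ ^ 2)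

/-- Smallest singular value of a (possibly rectangular) complex matrix:
the infimum of `‖A v‖` over unit vectors `v`. -/
noncomputable def sigmaMin {ι κ : Type*} [Fintype ι] [Fintype κ]
    (A : Matrix ι κ ℂ) : ℝ :=
  sInf {t : ℝ | ∃ v : κ → ℂ, vnorm v = 1 ∧ t = vnorm (A.mulVec v)}

/-- Spectral (operator 2-) norm of a complex matrix. -/
noncomputable def specNorm {ι κ : Type*} [Fintype ι] [Fintype κ]
    (A : Matrix ι κ ℂ) : ℝ :=
  sSup {t : ℝ | ∃ v : κ → ℂ, vnorm v = 1 ∧ t = vnorm (A.mulVec v)}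

/-- The weight/scaling function `p_w(z) = √(w_m² z⁴ + w_c² z² + w_k²)`. -/
noncomputable def pw (wm wc wk z : ℝ) : ℝ :=
  Real.sqrt (wm ^ 2 * z ^ 4 + wc ^ 2 * z ^ 2 + wk ^ 2)

/-- The quadratic matrix polynomial `P(z) = z² M + z C + K`. -/
noncomputable def Ppoly {n : ℕ} (M C K : Matrix (Fin n) (Fin n) ℂ) (z : ℂ) :
    Matrix (Fin n) (Fin n) ℂ :=
  z ^ 2 • M + z • C + K

/-- The column span (range) of a matrix, viewed as a subspace of `ℂⁿ`. -/
noncomputable def colSpan {n r : ℕ} (A : Matrix (Fin n) (Fin r) ℂ) : Submodule ℂ (Fin n → ℂ) :=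
  Submodule.span ℂ (Set.range fun j => fun i => A i j)

/-- The ε-pseudospectrum of the quadratic matrix polynomial `P(λ)=λ²M+λC+K`
(singular value characterization). -/
noncomputable def Lam {n : ℕ} (M C K : Matrix (Fin n) (Fin n) ℂ)
    (ε wm wc wk : ℝ) : Set ℂ :=
  {z : ℂ | sigmaMin (Ppoly M C K z) ≤ ε * pw wm wc wk ‖z‖}

/-- The restricted ε-pseudospectrum determined by the basis matrix `Vm`. -/
noncomputable def LamRes {n r : ℕ} (M C K : Matrix (Fin n) (Fin n) ℂ)
    (Vm : Matrix (Fin n) (Fin r) ℂ) (ε wm wc wk : ℝ) : Set ℂ :=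
  {z : ℂ | sigmaMin (Ppoly M C K z * Vm) ≤ ε * pw wm wc wk ‖z‖}

lemma vnorm_nonneg' {ι : Type*} [Fintype ι] (v : ι → ℂ) : 0 ≤ vnorm v :=
  Real.sqrt_nonneg _

lemma sum_abs_sq_eq {ι : Type*} [Fintype ι] (x : ι → ℂ) :
    ∑ i, ‖x i‖ ^ 2 = (star x ⬝ᵥ x).re := by
  simp [dotProduct, Complex.re_sum, mul_comm, Complex.mul_conj, Complex.normSq_eq_norm_sq,
    Pi.star_apply, ← Complex.ofReal_pow, Complex.ofReal_re]

lemma vnorm_mulVec_isometry {n r : ℕ} (V : Matrix (Fin n) (Fin r) ℂ)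
    (h : Vᴴ * V = 1) (w : Fin r → ℂ) : vnorm (V.mulVec w) = vnorm w := by
  unfold vnorm
  congr 1
  rw [sum_abs_sq_eq, sum_abs_sq_eq]
  congr 1
  rw [Matrix.star_mulVec, Matrix.dotProduct_mulVec, Matrix.vecMul_vecMul, h, Matrix.vecMul_one]

lemma vnorm_single {m : ℕ} (hm : 0 < m) : vnorm (Pi.single (⟨0, hm⟩ : Fin m) (1:ℂ)) = 1 := by
  unfold vnorm
  have hs : (∑ i, ‖((Pi.single (⟨0, hm⟩ : Fin m) (1:ℂ) : Fin m → ℂ) i)‖ ^ 2) = 1 := by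
    rw [Finset.sum_eq_single (⟨0, hm⟩ : Fin m)]
    · simp
    · intro b _ hb; simp [Pi.single_apply, hb]
    · simp
  rw [hs, Real.sqrt_one]

lemma sigmaSet_bddBelow {ι κ : Type*} [Fintype ι] [Fintype κ] (A : Matrix ι κ ℂ) :
    BddBelow {t : ℝ | ∃ v : κ → ℂ, vnorm v = 1 ∧ t = vnorm (A.mulVec v)} :=
  ⟨0, by rintro t ⟨v, _, rfl⟩; exact vnorm_nonneg' _⟩

lemma sigmaMin_le {ι κ : Type*} [Fintype ι] [Fintype κ] (A : Matrix ι κ ℂ)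
    (v : κ → ℂ) (hv : vnorm v = 1) : sigmaMin A ≤ vnorm (A.mulVec v) :=
  csInf_le (sigmaSet_bddBelow A) ⟨v, hv, rfl⟩

lemma sigmaMin_le_mul {n r : ℕ} (hr : 0 < r) (P : Matrix (Fin n) (Fin n) ℂ)
    (V : Matrix (Fin n) (Fin r) ℂ) (hV : Vᴴ * V = 1) :
    sigmaMin P ≤ sigmaMin (P * V) := by
  apply csInf_le_csInf (sigmaSet_bddBelow P)
  · exact ⟨vnorm ((P * V).mulVec (Pi.single ⟨0, hr⟩ 1)),
      Pi.single ⟨0, hr⟩ 1, vnorm_single hr, rfl⟩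
  · rintro t ⟨w, hw, rfl⟩
    exact ⟨V.mulVec w, by rw [vnorm_mulVec_isometry V hV w]; exact hw,
      by rw [Matrix.mulVec_mulVec]⟩

/-- Hermite interpolation of values: in the subspace framework for the
parameter-dependent polynomial `P(λ;ν) = λ²M(ν)+λC(ν)+K(ν)`, if the subspace spanned
by the orthonormal columns of `Vm` contains a right singular vector corresponding to
`σ_min(P(z^(ℓ);ν^(ℓ)))` at a rightmost point `z^(ℓ)` of the bounded pseudospectrum
`Λ_ε(P(·;ν^(ℓ)))`, then `α_ε(P(·;ν^(ℓ))) = α_ε^{V}(P(·;ν^(ℓ)))`. -/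
theorem hermite_interpolation_values
    {n d r : ℕ} (hr : 0 < r)
    (Mf Cf Kf : (Fin d → ℝ) → Matrix (Fin n) (Fin n) ℂ)
    (νl : Fin d → ℝ)
    (ε wm wc wk : ℝ) (hε : 0 < ε) (hwm : 0 ≤ wm) (hwc : 0 ≤ wc) (hwk : 0 ≤ wk)
    (Vm : Matrix (Fin n) (Fin r) ℂ) (hVm : Vmᴴ * Vm = 1)
    (hbd : Bornology.IsBounded (Lam (Mf νl) (Cf νl) (Kf νl) ε wm wc wk))
    (zl : ℂ) (hzl : zl ∈ Lam (Mf νl) (Cf νl) (Kf νl) ε wm wc wk)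
    (hzlRight : zl.re = sSup (Complex.re '' Lam (Mf νl) (Cf νl) (Kf νl) ε wm wc wk))
    (v : Fin n → ℂ) (hvMem : v ∈ colSpan Vm) (hvUnit : vnorm v = 1)
    (hvSing : vnorm ((Ppoly (Mf νl) (Cf νl) (Kf νl) zl).mulVec v) =
      sigmaMin (Ppoly (Mf νl) (Cf νl) (Kf νl) zl)) :
    sSup (Complex.re '' Lam (Mf νl) (Cf νl) (Kf νl) ε wm wc wk) =
      sSup (Complex.re '' LamRes (Mf νl) (Cf νl) (Kf νl) Vm ε wm wc wk) := by
  set M := Mf νl; set C := Cf νl; set K := Kf νl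
  -- LamRes ⊆ Lam
  have hsub : LamRes M C K Vm ε wm wc wk ⊆ Lam M C K ε wm wc wk := by
    intro z hz
    exact le_trans (sigmaMin_le_mul hr (Ppoly M C K z) Vm hVm) hz
  -- v = Vm *ᵥ w
  have hrange : v ∈ LinearMap.range (Matrix.mulVecLin Vm) := by
    rw [Matrix.range_mulVecLin]
    have : (Set.range fun j => fun i => Vm i j) = Set.range Vmᵀ := by
      congr 1
    rw [colSpan, this] at hvMem
    exact hvMem
  obtain ⟨w, hw⟩ := hrange
  have hwv : Vm.mulVec w = v := hw
  have hwUnit : vnorm w = 1 := by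
    rw [← vnorm_mulVec_isometry Vm hVm w, hwv]; exact hvUnit
  -- zl ∈ LamRes
  have hzlRes : zl ∈ LamRes M C K Vm ε wm wc wk := by
    have h1 : sigmaMin (Ppoly M C K zl * Vm) ≤ vnorm ((Ppoly M C K zl * Vm).mulVec w) :=
      sigmaMin_le _ w hwUnit
    rw [← Matrix.mulVec_mulVec, hwv, hvSing] at h1
    exact le_trans h1 hzl
  -- bddAbove of images
  obtain ⟨R, hR⟩ := hbd.exists_norm_le
  have hbA : BddAbove (Complex.re '' Lam M C K ε wm wc wk) := by
    refine ⟨R, ?_⟩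
    rintro t ⟨z, hzmem, rfl⟩
    exact le_trans (Complex.re_le_norm z) (hR z hzmem)
  have hbAres : BddAbove (Complex.re '' LamRes M C K Vm ε wm wc wk) :=
    hbA.mono (Set.image_mono hsub)
  apply le_antisymm
  · rw [← hzlRight]
    exact le_csSup hbAres ⟨zl, hzlRes, rfl⟩
  · exact csSup_le_csSup hbA ⟨zl.re, zl, hzlRes, rfl⟩ (Set.image_mono hsub)
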